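/- Let m and n be positive integers with m ≤ n−1 and let a, c be real numbers such that a, c, and a−c are not integers. Then Σ_{k=0}^{m} [(−m)_k (a)_k (c+n)_k] / [(c)_k (a+1)_k · k!] = (−1)^n · m! · Γ(1−c+a)·Γ(a+1)·Γ(c) / (Γ(c+n)·Γ(1−n−c+a)·Γ(m+a+1)) + [n!·Γ(a+1)·Γ(c) / (Γ(c+n)·Γ(1−n−c+a))] · Σ_{k=0}^{n−m−1} (−1)^{m+k} · Γ(1−n−c+a+k) / (Γ(n−m−k) · (n−k) · k! · Γ(m+a+1−n+k)). -/

import Mathlib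

open scoped BigOperators
open Finset

/-- Pochhammer (ascending factorial) `(x)_k = x (x+1) ⋯ (x+k-1)`. -/
noncomputable def poch (x : ℝ) (k : ℕ) : ℝ := Polynomial.eval x (ascPochhammer ℝ k)

noncomputable def ff (x : ℝ) : ℕ → ℝ
  | 0 => 1
  | k+1 => ff x k * (x - k)

lemma poch_zero (x : ℝ) : poch x 0 = 1 := by simp [poch]
lemma poch_succ (x : ℝ) (k : ℕ) : poch x (k+1) = poch x k * (x + k) := by
  simp [poch, ascPochhammer_succ_right]
lemma poch_one (x : ℝ) : poch x 1 = x := by simp [poch]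

lemma poch_succ_left (x : ℝ) (k : ℕ) : poch x (k+1) = x * poch (x+1) k := by
  induction k with
  | zero => simp [poch_succ, poch_zero]
  | succ k ih =>
      rw [poch_succ, ih, poch_succ]
      push_cast; ring

lemma poch_add (x : ℝ) (i j : ℕ) : poch x (i+j) = poch x i * poch (x+i) j := by
  induction j with
  | zero => simp [poch_zero]
  | succ j ih => rw [show i + (j+1) = (i+j)+1 from rfl, poch_succ, ih, poch_succ]; push_cast; ring

lemma ff_zero (x : ℝ) : ff x 0 = 1 := rfl
lemma ff_succ (x : ℝ) (k : ℕ) : ff x (k+1) = ff x k * (x - k) := rfl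

lemma ff_succ_left (x : ℝ) (k : ℕ) : ff x (k+1) = x * ff (x-1) k := by
  induction k with
  | zero => simp [ff_succ, ff_zero]
  | succ k ih =>
      rw [ff_succ, ih, ff_succ]
      push_cast; ring

lemma poch_eq_ff (x : ℝ) (n : ℕ) : poch x n = ff (x + n - 1) n := by
  induction n with
  | zero => simp [poch_zero, ff_zero]
  | succ n ih =>
      rw [poch_succ, ih, show (x + (n+1:ℕ) - 1 : ℝ) = (x + n - 1) + 1 by push_cast; ring,
        ff_succ_left]
      push_cast; ring_nf

lemma ff_eq_poch (x : ℝ) (e : ℕ) : ff x e = poch (x - e + 1) e := by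
  rw [poch_eq_ff]; ring_nf

lemma poch_eq_neg_ff (x : ℝ) (k : ℕ) : poch x k = (-1)^k * ff (-x) k := by
  induction k with
  | zero => simp [poch_zero, ff_zero]
  | succ k ih => rw [poch_succ, ih, ff_succ]; ring

lemma poch_ne_zero' (x : ℝ) (h : ∀ i : ℕ, x + i ≠ 0) (k : ℕ) : poch x k ≠ 0 := by
  induction k with
  | zero => simp [poch_zero]
  | succ k ih =>
      rw [poch_succ]
      exact mul_ne_zero ih (h k)

lemma nonint_add_nat (x : ℝ) (h : ∀ z : ℤ, x ≠ z) : ∀ i : ℕ, x + i ≠ 0 := by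
  intro i hz
  exact h (-i) (by push_cast; linarith)

lemma poch_ne_zero (x : ℝ) (h : ∀ z : ℤ, x ≠ z) (k : ℕ) : poch x k ≠ 0 :=
  poch_ne_zero' x (nonint_add_nat x h) k

lemma poch_neg_nat (m : ℕ) : ∀ k ≤ m, poch (-(m:ℝ)) k = (-1)^k * (m.choose k) * (k.factorial) := by
  intro k hk
  induction k with
  | zero => simp [poch_zero]
  | succ k ih =>
      have hk' : k ≤ m := le_trans (Nat.le_succ k) hk
      rw [poch_succ, ih hk']
      have h1 : (-(m:ℝ) + k) = -((m - k : ℕ) : ℝ) := by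
        have : (m - k : ℕ) = m - k := rfl
        push_cast [Nat.cast_sub hk']
        ring
      rw [h1]
      have h2 : (m.choose (k+1)) * (k+1) = m.choose k * (m - k) := Nat.choose_succ_right_eq m k
      have h2' : ((m.choose (k+1)) : ℝ) * (k+1) = (m.choose k : ℝ) * ((m - k : ℕ) : ℝ) := by
        exact_mod_cast congrArg (Nat.cast : ℕ → ℝ) h2
      rw [Nat.factorial_succ]
      push_cast at h2' ⊢
      linear_combination ((-1:ℝ)^k * (k.factorial:ℝ)) * h2'

lemma alt_pascal (m : ℕ) (f : ℕ → ℝ) :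
    ∑ k ∈ range (m+2), (-1:ℝ)^k * ((m+1).choose k) * f k
    = ∑ k ∈ range (m+1), (-1:ℝ)^k * (m.choose k) * f k
      - ∑ k ∈ range (m+1), (-1:ℝ)^k * (m.choose k) * f (k+1) := by
  rw [Finset.sum_range_succ' (fun k => (-1:ℝ)^k * ((m+1).choose k) * f k) (m+1)]
  have h1 : ∀ k, (-1:ℝ)^(k+1) * ((m+1).choose (k+1)) * f (k+1)
      = (-1)^(k+1) * (m.choose k) * f (k+1) + (-1)^(k+1) * (m.choose (k+1)) * f (k+1) := by
    intro k
    rw [Nat.choose_succ_succ]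
    push_cast; ring
  rw [Finset.sum_congr rfl (fun k _ => h1 k), Finset.sum_add_distrib]
  have h2 : ∑ k ∈ range (m+1), (-1:ℝ)^(k+1) * (m.choose k) * f (k+1)
      = - ∑ k ∈ range (m+1), (-1:ℝ)^k * (m.choose k) * f (k+1) := by
    rw [← Finset.sum_neg_distrib]
    exact Finset.sum_congr rfl (fun k _ => by ring)
  have h3 : ∑ k ∈ range (m+1), (-1:ℝ)^(k+1) * (m.choose (k+1)) * f (k+1)
      = ∑ k ∈ range (m+1), (-1:ℝ)^k * (m.choose k) * f k - f 0 := by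
    rw [Finset.sum_range_succ' (fun k => (-1:ℝ)^k * (m.choose k) * f k) m]
    rw [Finset.sum_range_succ]
    simp [Nat.choose_succ_self]
  rw [h2, h3]
  simp
  ring

lemma ff_shift (x : ℝ) (e : ℕ) : ff (x+1) (e+1) - ff x (e+1) = (e+1) * ff x e := by
  rw [ff_succ_left, ff_succ]
  push_cast
  ring_nf

lemma alt_sum_ff (m d : ℕ) : ∀ x : ℝ,
    ∑ k ∈ range (m+1), (-1:ℝ)^k * (m.choose k) * ff (x + k) d
    = (-1)^m * (∏ i ∈ range m, ((d:ℝ) - i)) * ff x (d - m) := by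
  induction m with
  | zero => intro x; simp
  | succ m ih =>
      intro x
      rw [alt_pascal m (fun k => ff (x + k) d)]
      have e1 : ∑ k ∈ range (m+1), (-1:ℝ)^k * (m.choose k) * ff (x + k) d
          = (-1)^m * (∏ i ∈ range m, ((d:ℝ) - i)) * ff x (d - m) := ih x
      have e2 : ∑ k ∈ range (m+1), (-1:ℝ)^k * (m.choose k) * ff (x + ((k+1:ℕ):ℝ)) d
          = (-1)^m * (∏ i ∈ range m, ((d:ℝ) - i)) * ff (x+1) (d - m) := by
        rw [← ih (x+1)]
        exact Finset.sum_congr rfl (fun k _ => by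
          rw [show x + ((k+1:ℕ):ℝ) = (x+1) + k by push_cast; ring])
      rw [e1, e2]
      rcases le_or_gt (m+1) d with hd | hd
      · have hdm : d - m = (d - (m+1)) + 1 := by omega
        have hcast : ((d - (m+1) : ℕ) : ℝ) + 1 = (d:ℝ) - m := by
          have : (d - (m+1) : ℕ) = d - (m+1) := rfl
          push_cast [Nat.cast_sub hd]
          ring
        rw [hdm, Finset.prod_range_succ]
        have := ff_shift x (d - (m+1))
        rw [hcast] at this
        calc (-1:ℝ)^m * (∏ i ∈ range m, ((d:ℝ) - i)) * ff x ((d-(m+1))+1)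
              - (-1)^m * (∏ i ∈ range m, ((d:ℝ) - i)) * ff (x+1) ((d-(m+1))+1)
            = -((-1:ℝ)^m * (∏ i ∈ range m, ((d:ℝ) - i)) * (ff (x+1) ((d-(m+1))+1) - ff x ((d-(m+1))+1))) := by ring
          _ = (-1)^(m+1) * ((∏ i ∈ range m, ((d:ℝ) - i)) * ((d:ℝ) - m)) * ff x (d-(m+1)) := by
              rw [this]; ring
      · have hd1 : d - m = 0 := by omega
        have hd2 : d - (m+1) = 0 := by omega
        rw [hd1, hd2]
        simp only [ff_zero]
        have hz : (∏ i ∈ range (m+1), ((d:ℝ) - i)) = 0 := by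
          apply Finset.prod_eq_zero (Finset.mem_range.mpr (by omega : d < m+1))
          simp
        rw [hz]
        ring

lemma alt_sum_inv (m : ℕ) : ∀ x : ℝ, (∀ i : ℕ, x + i ≠ 0) →
    ∑ k ∈ range (m+1), (-1:ℝ)^k * (m.choose k) / (x + k) = (m.factorial : ℝ) / poch x (m+1) := by
  induction m with
  | zero => intro x hx; simp [poch_one]
  | succ m ih =>
      intro x hx
      have hsum : ∑ k ∈ range (m+2), (-1:ℝ)^k * ((m+1).choose k) / (x + k)
          = ∑ k ∈ range (m+2), (-1:ℝ)^k * ((m+1).choose k) * (1 / (x + k)) := by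
        exact Finset.sum_congr rfl (fun k _ => by ring)
      rw [hsum, alt_pascal m (fun k => 1 / (x + k))]
      have h1 : ∑ k ∈ range (m+1), (-1:ℝ)^k * (m.choose k) * (1 / (x + k))
          = (m.factorial : ℝ) / poch x (m+1) := by
        rw [← ih x hx]
        exact Finset.sum_congr rfl (fun k _ => by ring)
      have hx1 : ∀ i : ℕ, (x+1) + i ≠ 0 := by
        intro i hz
        exact hx (i+1) (by push_cast; linarith)
      have h2 : ∑ k ∈ range (m+1), (-1:ℝ)^k * (m.choose k) * (1 / (x + ((k+1:ℕ):ℝ)))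
          = (m.factorial : ℝ) / poch (x+1) (m+1) := by
        rw [← ih (x+1) hx1]
        exact Finset.sum_congr rfl (fun k _ => by
          rw [show x + ((k+1:ℕ):ℝ) = (x+1) + k by push_cast; ring]; ring)
      rw [h1, h2]
      -- now: m!/poch x (m+1) - m!/poch (x+1) (m+1) = (m+1)!/poch x (m+2)
      have hA : poch (x+1) m ≠ 0 := poch_ne_zero' (x+1) hx1 m
      have hx0 : x ≠ 0 := by have := hx 0; simpa using this
      have hxm : x + ((m:ℝ)+1) ≠ 0 := by have := hx (m+1); push_cast at this; convert this using 2
      have e3 : poch x (m+1) = x * poch (x+1) m := poch_succ_left x m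
      have e4 : poch (x+1) (m+1) = poch (x+1) m * ((x+1) + m) := poch_succ (x+1) m
      have e5 : poch x (m+1+1) = x * poch (x+1) m * (x + ((m:ℝ)+1)) := by
        rw [poch_succ, e3]; push_cast; ring
      rw [e3, e4, e5, Nat.factorial_succ]
      have hxm' : (x+1) + (m:ℝ) ≠ 0 := by intro hz; exact hxm (by linarith)
      field_simp
      push_cast
      ring

lemma ff_vandermonde (x y : ℝ) : ∀ n : ℕ, ff (x+y) n
    = ∑ j ∈ range (n+1), (n.choose j : ℝ) * ff x j * ff y (n-j) := by
  intro n
  induction n with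
  | zero => simp [ff_zero]
  | succ n ih =>
      have step : ff (x+y) (n+1)
          = ∑ j ∈ range (n+1), ((n.choose j : ℝ) * ff x (j+1) * ff y (n-j)
              + (n.choose j : ℝ) * ff x j * ff y ((n+1)-j)) := by
        rw [ff_succ, ih, Finset.sum_mul]
        refine Finset.sum_congr rfl (fun j hj => ?_)
        have hj' : j ≤ n := Nat.lt_succ_iff.mp (Finset.mem_range.mp hj)
        have hc1 : ((n - j : ℕ) : ℝ) = (n:ℝ) - j := by push_cast [Nat.cast_sub hj']; ring
        have hc2 : (n+1) - j = (n-j) + 1 := by omega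
        rw [hc2, ff_succ, ff_succ, hc1]
        ring
      rw [step, Finset.sum_add_distrib]
      have h2 : ∑ j ∈ range (n+1), (n.choose j : ℝ) * ff x j * ff y ((n+1)-j)
          = ∑ j ∈ range n, (n.choose (j+1) : ℝ) * ff x (j+1) * ff y (n-j) + ff y (n+1) := by
        rw [Finset.sum_range_succ' (fun j => (n.choose j : ℝ) * ff x j * ff y ((n+1)-j)) n]
        simp [ff_zero, Nat.succ_sub_succ]
      have h3 : ∑ j ∈ range (n+1), (n.choose (j+1) : ℝ) * ff x (j+1) * ff y (n-j)
          = ∑ j ∈ range n, (n.choose (j+1) : ℝ) * ff x (j+1) * ff y (n-j) := by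
        rw [Finset.sum_range_succ]
        simp [Nat.choose_succ_self]
      rw [Finset.sum_range_succ' (fun j => ((n+1).choose j : ℝ) * ff x j * ff y ((n+1)-j)) (n+1)]
      have h4 : ∀ j ∈ range (n+1), ((n+1).choose (j+1) : ℝ) * ff x (j+1) * ff y ((n+1)-(j+1))
          = (n.choose j : ℝ) * ff x (j+1) * ff y (n-j) + (n.choose (j+1) : ℝ) * ff x (j+1) * ff y (n-j) := by
        intro j _
        rw [Nat.choose_succ_succ, Nat.succ_sub_succ]
        push_cast; ring
      rw [Finset.sum_congr rfl h4, Finset.sum_add_distrib, h3, h2]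
      simp [ff_zero]
      ring

lemma prod_desc (d : ℕ) : ∀ m : ℕ, m ≤ d →
    (∏ i ∈ range m, ((d:ℝ) - i)) = (d.factorial : ℝ) / ((d-m).factorial : ℝ) := by
  intro m
  induction m with
  | zero =>
      intro _
      rw [Finset.prod_range_zero, Nat.sub_zero,
        div_self (Nat.cast_ne_zero.mpr (Nat.factorial_ne_zero d))]
  | succ m ih =>
      intro h
      have hm : m ≤ d := le_trans (Nat.le_succ m) h
      rw [Finset.prod_range_succ, ih hm]
      have h1 : (d - m) = (d - (m+1)) + 1 := by omega
      have h3 : ((d - (m+1) : ℕ):ℝ) + 1 = (d:ℝ) - m := by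
        push_cast [Nat.cast_sub h]; ring
      have h4 : ((d-m).factorial : ℝ) = ((d:ℝ)-m) * ((d-(m+1)).factorial : ℝ) := by
        rw [h1, Nat.factorial_succ]; push_cast; rw [h3]
      rw [h4]
      have h5 : ((d:ℝ) - m) ≠ 0 := by
        rw [← h3]; positivity
      have h6 : ((d-(m+1)).factorial : ℝ) ≠ 0 := Nat.cast_ne_zero.mpr (Nat.factorial_ne_zero _)
      field_simp

lemma core (m n : ℕ) (hmn : m + 1 ≤ n) (a c : ℝ)
    (ha : ∀ z : ℤ, a ≠ z) (hc : ∀ z : ℤ, c ≠ z) :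
    ∑ k ∈ range (m+1), poch (-(m:ℝ)) k * poch a k * poch (c+(n:ℝ)) k /
        (poch c k * poch (a+1) k * (k.factorial:ℝ))
    = (m.factorial:ℝ) * poch (c-a) n / (poch c n * poch (a+1) m)
      + ((n.factorial:ℝ) / poch c n) * ∑ j ∈ range (n-m),
          (-1:ℝ)^m * ff (c-a+(n:ℝ)-1) j * (a * ff (a-1) (n-m-1-j)) /
            ((j.factorial:ℝ) * ((n:ℝ)-(j:ℝ)) * (((n-m-1-j).factorial:ℝ))) := by
  have haN : ∀ i : ℕ, a + i ≠ 0 := nonint_add_nat a ha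
  have hcN : ∀ i : ℕ, c + i ≠ 0 := nonint_add_nat c hc
  have ha1N : ∀ i : ℕ, (a+1) + i ≠ 0 := by
    intro i hz; exact haN (i+1) (by push_cast; linarith)
  have ha0 : a ≠ 0 := by have := haN 0; simpa using this
  have hpcn : poch c n ≠ 0 := poch_ne_zero' c hcN n
  -- Step A
  have stepA : ∀ k ∈ range (m+1),
      poch (-(m:ℝ)) k * poch a k * poch (c+(n:ℝ)) k /
        (poch c k * poch (a+1) k * (k.factorial:ℝ))
      = (-1:ℝ)^k * (m.choose k) * (a * poch (c+(k:ℝ)) n) / ((a+(k:ℝ)) * poch c n) := by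
    intro k hk
    have hkm : k ≤ m := Nat.lt_succ_iff.mp (Finset.mem_range.mp hk)
    have E0 : poch (-(m:ℝ)) k = (-1:ℝ)^k * (m.choose k) * (k.factorial:ℝ) := poch_neg_nat m k hkm
    have E1 : poch a k * (a+(k:ℝ)) = a * poch (a+1) k := by
      rw [← poch_succ, poch_succ_left]
    have E2 : poch c k * poch (c+(k:ℝ)) n = poch c n * poch (c+(n:ℝ)) k := by
      rw [← poch_add, ← poch_add, Nat.add_comm]
    have hck : poch c k ≠ 0 := poch_ne_zero' c hcN k
    have hak : poch (a+1) k ≠ 0 := poch_ne_zero' (a+1) ha1N k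
    have hkf : (k.factorial:ℝ) ≠ 0 := Nat.cast_ne_zero.mpr (Nat.factorial_ne_zero _)
    have haK : a + (k:ℝ) ≠ 0 := haN k
    have key : a * poch (c+(k:ℝ)) n * (poch c k * poch (a+1) k)
        = poch a k * poch (c+(n:ℝ)) k * ((a+(k:ℝ)) * poch c n) := by
      linear_combination (a * poch (a+1) k) * E2 - (poch c n * poch (c+(n:ℝ)) k) * E1
    rw [E0, div_eq_div_iff (by exact mul_ne_zero (mul_ne_zero hck hak) hkf)
      (mul_ne_zero haK hpcn)]
    linear_combination (-((-1:ℝ)^k * (m.choose k) * (k.factorial:ℝ))) * key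
  rw [Finset.sum_congr rfl stepA]
  -- Step B : expand poch (c+k) n by Vandermonde
  have stepB : ∀ k : ℕ,
      a * poch (c+(k:ℝ)) n
      = a * poch (c-a) n + (a+(k:ℝ)) * (a * ∑ j ∈ range n,
          (n.choose j : ℝ) * ff (c-a+(n:ℝ)-1) j * ff ((a-1)+(k:ℝ)) (n-1-j)) := by
    intro k
    have hV : poch (c+(k:ℝ)) n = ∑ j ∈ range (n+1),
        (n.choose j : ℝ) * ff (c-a+(n:ℝ)-1) j * ff (a+(k:ℝ)) (n-j) := by
      rw [poch_eq_ff]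
      rw [show c+(k:ℝ)+(n:ℝ)-1 = (c-a+(n:ℝ)-1) + (a+(k:ℝ)) by ring]
      exact ff_vandermonde _ _ n
    rw [hV, Finset.sum_range_succ]
    have hjn : ∀ j ∈ range n, (n.choose j : ℝ) * ff (c-a+(n:ℝ)-1) j * ff (a+(k:ℝ)) (n-j)
        = (a+(k:ℝ)) * ((n.choose j : ℝ) * ff (c-a+(n:ℝ)-1) j * ff ((a-1)+(k:ℝ)) (n-1-j)) := by
      intro j hj
      have hj' : j < n := Finset.mem_range.mp hj
      have h1 : n - j = (n-1-j) + 1 := by omega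
      rw [h1, ff_succ_left, show a+(k:ℝ)-1 = (a-1)+(k:ℝ) by ring]
      ring
    rw [Finset.sum_congr rfl hjn, ← Finset.mul_sum]
    have hfn : ff (c-a+(n:ℝ)-1) n = poch (c-a) n := by
      rw [ff_eq_poch]; ring_nf
    rw [Nat.sub_self, ff_zero, Nat.choose_self, hfn]
    push_cast
    ring
  -- use step B inside the sum
  have stepB' : ∀ k ∈ range (m+1),
      (-1:ℝ)^k * (m.choose k) * (a * poch (c+(k:ℝ)) n) / ((a+(k:ℝ)) * poch c n)
      = (a * poch (c-a) n / poch c n) * ((-1:ℝ)^k * (m.choose k) / (a+(k:ℝ)))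
        + (a/poch c n) * ∑ j ∈ range n, (-1:ℝ)^k * (m.choose k) *
            ((n.choose j : ℝ) * ff (c-a+(n:ℝ)-1) j * ff ((a-1)+(k:ℝ)) (n-1-j)) := by
    intro k hk
    have haK : a + (k:ℝ) ≠ 0 := haN k
    rw [stepB k, ← Finset.mul_sum]
    field_simp
  rw [Finset.sum_congr rfl stepB', Finset.sum_add_distrib, ← Finset.mul_sum, ← Finset.mul_sum]
  -- first piece
  have P1 : (a * poch (c-a) n / poch c n) * ∑ k ∈ range (m+1), (-1:ℝ)^k * (m.choose k) / (a+(k:ℝ))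
      = (m.factorial:ℝ) * poch (c-a) n / (poch c n * poch (a+1) m) := by
    rw [alt_sum_inv m a haN]
    have h0 : poch a (m+1) = a * poch (a+1) m := poch_succ_left a m
    rw [h0]
    have h1 : poch (a+1) m ≠ 0 := poch_ne_zero' (a+1) ha1N m
    field_simp
  rw [P1]
  congr 1
  -- second piece : swap sums
  rw [Finset.sum_comm]
  -- inner sums via alt_sum_ff
  have inner : ∀ j : ℕ, ∑ k ∈ range (m+1), (-1:ℝ)^k * (m.choose k) *
        ((n.choose j : ℝ) * ff (c-a+(n:ℝ)-1) j * ff ((a-1)+(k:ℝ)) (n-1-j))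
      = (n.choose j : ℝ) * ff (c-a+(n:ℝ)-1) j *
          ((-1:ℝ)^m * (∏ i ∈ range m, ((((n-1-j):ℕ):ℝ) - (i:ℝ))) * ff (a-1) (n-1-j-m)) := by
    intro j
    rw [← alt_sum_ff m (n-1-j) (a-1), Finset.mul_sum]
    exact Finset.sum_congr rfl (fun k _ => by ring)
  rw [Finset.sum_congr rfl (fun j _ => inner j)]
  -- kill the terms with j ≥ n - m
  have hsub : range (n-m) ⊆ range n := Finset.range_mono (Nat.sub_le n m)
  rw [← Finset.sum_subset hsub (by
    intro j hj hj'
    have hjn : j < n := Finset.mem_range.mp hj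
    have hjm : n - m ≤ j := by
      by_contra hcon
      exact hj' (Finset.mem_range.mpr (by omega))
    have hlt : n - 1 - j < m := by omega
    have hz : (∏ i ∈ range m, ((((n-1-j):ℕ):ℝ) - (i:ℝ))) = 0 := by
      apply Finset.prod_eq_zero (Finset.mem_range.mpr hlt)
      simp
    rw [hz]
    ring)]
  -- now term-by-term on range (n-m)
  rw [Finset.mul_sum, Finset.mul_sum]
  refine Finset.sum_congr rfl (fun j hj => ?_)
  have hjn : j < n - m := Finset.mem_range.mp hj
  have hmle : m ≤ n - 1 - j := by omega
  rw [prod_desc (n-1-j) m hmle]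
  have e1 : n - 1 - j - m = n - m - 1 - j := by omega
  rw [e1]
  -- remaining: pure arithmetic of factorials
  have hjle : j ≤ n := by omega
  have hnat : (n.choose j) * j.factorial * ((n-j) * (n-1-j).factorial) = n.factorial := by
    have h2 : (n - j) * (n-1-j).factorial = (n-j).factorial := by
      have : n - j = (n-1-j) + 1 := by omega
      rw [this, Nat.factorial_succ]
    rw [h2]
    exact Nat.choose_mul_factorial_mul_factorial hjle
  have hnat' : ((n.choose j):ℝ) * (j.factorial:ℝ) * (((n:ℝ)-(j:ℝ)) * ((n-1-j).factorial:ℝ))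
      = (n.factorial:ℝ) := by
    have hc1 : ((n-j:ℕ):ℝ) = (n:ℝ)-(j:ℝ) := by push_cast [Nat.cast_sub hjle]; ring
    rw [← hc1]
    exact_mod_cast congrArg (Nat.cast : ℕ → ℝ) hnat
  have hjf : (j.factorial:ℝ) ≠ 0 := Nat.cast_ne_zero.mpr (Nat.factorial_ne_zero _)
  have hnj : ((n:ℝ)-(j:ℝ)) ≠ 0 := by
    have : (0:ℝ) < (n:ℝ)-(j:ℝ) := by
      have : j < n := by omega
      have := Nat.cast_lt (α := ℝ) |>.mpr this
      linarith
    linarith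
  have hf1 : ((n-1-j).factorial:ℝ) ≠ 0 := Nat.cast_ne_zero.mpr (Nat.factorial_ne_zero _)
  have hf2 : ((n-m-1-j).factorial:ℝ) ≠ 0 := Nat.cast_ne_zero.mpr (Nat.factorial_ne_zero _)
  field_simp
  linear_combination (ff (c-a+(n:ℝ)-1) j * ff (a-1) (n-m-1-j)) * hnat'

lemma Gamma_shift (x : ℝ) (h : ∀ i : ℕ, x + i ≠ 0) : ∀ n : ℕ,
    Real.Gamma (x + n) = poch x n * Real.Gamma x := by
  intro n
  induction n with
  | zero => simp [poch_zero]
  | succ n ih =>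
      rw [show x + ((n+1:ℕ):ℝ) = (x + n) + 1 by push_cast; ring, Real.Gamma_add_one (h n), ih,
        poch_succ]
      ring

lemma Gamma_ne_zero' (x : ℝ) (h : ∀ i : ℕ, x + i ≠ 0) : Real.Gamma x ≠ 0 := by
  apply Real.Gamma_ne_zero
  intro i hz
  exact h i (by rw [hz]; ring)

/-- The Karp–Prilepkina-type evaluation of `₃F₂(−m, a, c+n; c, a+1; 1)` for `m ≤ n − 1`. -/
theorem karp_prilepkina_case (m n : ℕ) (hm : 0 < m) (hn : 0 < n) (hmn : m + 1 ≤ n)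
    (a c : ℝ) (ha : ∀ z : ℤ, a ≠ (z : ℝ)) (hc : ∀ z : ℤ, c ≠ (z : ℝ))
    (hac : ∀ z : ℤ, a - c ≠ (z : ℝ)) :
    ∑ k ∈ range (m + 1),
        poch (-(m : ℝ)) k * poch a k * poch (c + (n : ℝ)) k /
          (poch c k * poch (a + 1) k * (k.factorial : ℝ)) =
      (-1 : ℝ) ^ n * (m.factorial : ℝ) * Real.Gamma (1 - c + a) * Real.Gamma (a + 1) *
          Real.Gamma c /
          (Real.Gamma (c + (n : ℝ)) * Real.Gamma (1 - (n : ℝ) - c + a) *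
            Real.Gamma ((m : ℝ) + a + 1)) +
        (n.factorial : ℝ) * Real.Gamma (a + 1) * Real.Gamma c /
            (Real.Gamma (c + (n : ℝ)) * Real.Gamma (1 - (n : ℝ) - c + a)) *
          ∑ k ∈ range (n - m),
            (-1 : ℝ) ^ (m + k) * Real.Gamma (1 - (n : ℝ) - c + a + (k : ℝ)) /
              (Real.Gamma ((n : ℝ) - (m : ℝ) - (k : ℝ)) * ((n : ℝ) - (k : ℝ)) *
                (k.factorial : ℝ) *
                Real.Gamma ((m : ℝ) + a + 1 - (n : ℝ) + (k : ℝ))) := by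
  have haN : ∀ i : ℕ, a + i ≠ 0 := nonint_add_nat a ha
  have hcN : ∀ i : ℕ, c + i ≠ 0 := nonint_add_nat c hc
  have ha1N : ∀ i : ℕ, (a+1) + i ≠ 0 := by
    intro i hz; exact haN (i+1) (by push_cast; linarith)
  have hacn : ∀ i : ℕ, (1-(n:ℝ)-c+a) + i ≠ 0 := by
    intro i hz
    exact hac ((n:ℤ) - 1 - i) (by push_cast; linarith)
  -- Gamma values
  have hGc : Real.Gamma c ≠ 0 := Gamma_ne_zero' c hcN
  have hGa : Real.Gamma (a+1) ≠ 0 := Gamma_ne_zero' (a+1) ha1N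
  have hG1 : Real.Gamma (1-(n:ℝ)-c+a) ≠ 0 := Gamma_ne_zero' _ hacn
  have h1 : Real.Gamma (c + (n:ℝ)) = poch c n * Real.Gamma c := Gamma_shift c hcN n
  have h2 : Real.Gamma (1 - c + a) = poch (1-(n:ℝ)-c+a) n * Real.Gamma (1-(n:ℝ)-c+a) := by
    rw [show (1 - c + a) = (1-(n:ℝ)-c+a) + (n:ℝ) by ring]
    exact Gamma_shift _ hacn n
  have h3 : Real.Gamma ((m:ℝ)+a+1) = poch (a+1) m * Real.Gamma (a+1) := by
    rw [show (m:ℝ)+a+1 = (a+1)+(m:ℝ) by ring]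
    exact Gamma_shift (a+1) ha1N m
  -- poch sign conversions
  have hsign : ∀ k : ℕ, poch (1-(n:ℝ)-c+a) k = (-1:ℝ)^k * ff (c-a+(n:ℝ)-1) k := by
    intro k
    rw [poch_eq_neg_ff]
    congr 2
    ring
  have hfn : ff (c-a+(n:ℝ)-1) n = poch (c-a) n := by
    rw [ff_eq_poch]; ring_nf
  have hpcn : poch c n ≠ 0 := poch_ne_zero' c hcN n
  have hpam : poch (a+1) m ≠ 0 := poch_ne_zero' (a+1) ha1N m
  rw [core m n hmn a c ha hc]
  congr 1
  · -- first terms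
    rw [h1, h2, h3]
    rw [show poch (1-(n:ℝ)-c+a) n = (-1:ℝ)^n * poch (c-a) n by rw [hsign n, hfn]]
    field_simp
    ring_nf
    rw [mul_comm n 2, pow_mul]
    norm_num
  · -- sums
    rw [Finset.mul_sum, Finset.mul_sum]
    refine Finset.sum_congr rfl (fun k hk => ?_)
    have hkn : k < n - m := Finset.mem_range.mp hk
    -- Gamma(1-n-c+a+k)
    have g1 : Real.Gamma (1 - (n:ℝ) - c + a + (k:ℝ))
        = poch (1-(n:ℝ)-c+a) k * Real.Gamma (1-(n:ℝ)-c+a) := Gamma_shift _ hacn k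
    -- Gamma(n-m-k) = (n-m-1-k)!
    have hcast1 : ((n-m-1-k:ℕ):ℝ) = (n:ℝ)-(m:ℝ)-1-(k:ℝ) := by
      have hz : (n-m-1-k) + (m+1+k) = n := by omega
      have := congrArg (Nat.cast : ℕ → ℝ) hz
      push_cast at this
      linarith
    have g2 : Real.Gamma ((n:ℝ)-(m:ℝ)-(k:ℝ)) = ((n-m-1-k).factorial : ℝ) := by
      rw [show (n:ℝ)-(m:ℝ)-(k:ℝ) = ((n-m-1-k:ℕ):ℝ) + 1 by rw [hcast1]; ring]
      exact_mod_cast Real.Gamma_nat_eq_factorial (n-m-1-k)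
    -- Gamma(m+a+1-n+k)
    have hcast2 : ((n-m-k:ℕ):ℝ) = (n:ℝ)-(m:ℝ)-(k:ℝ) := by
      have hz : (n-m-k) + (m+k) = n := by omega
      have := congrArg (Nat.cast : ℕ → ℝ) hz
      push_cast at this
      linarith
    have hmkN : ∀ i : ℕ, ((m:ℝ)+a+1-(n:ℝ)+(k:ℝ)) + i ≠ 0 := by
      intro i hz
      exact ha ((n:ℤ) - m - 1 - k - i) (by push_cast; linarith)
    have g3 : Real.Gamma (a+1) = poch ((m:ℝ)+a+1-(n:ℝ)+(k:ℝ)) (n-m-k) *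
        Real.Gamma ((m:ℝ)+a+1-(n:ℝ)+(k:ℝ)) := by
      rw [← Gamma_shift _ hmkN (n-m-k)]
      congr 1
      rw [hcast2]; ring
    have hGmk : Real.Gamma ((m:ℝ)+a+1-(n:ℝ)+(k:ℝ)) ≠ 0 := Gamma_ne_zero' _ hmkN
    -- poch (m+a+1-n+k) (n-m-k) = a * ff (a-1) (n-m-1-k)
    have g4 : poch ((m:ℝ)+a+1-(n:ℝ)+(k:ℝ)) (n-m-k) = a * ff (a-1) (n-m-1-k) := by
      have e1 : n - m - k = (n-m-1-k) + 1 := by omega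
      have e2 : ff a ((n-m-1-k)+1) = a * ff (a-1) (n-m-1-k) := ff_succ_left a _
      rw [← e2, ← e1, ff_eq_poch]
      congr 1
      rw [hcast2]; ring
    rw [h1, g1, g2, g3, g4, hsign k]
    have hnmf : ((n-m-1-k).factorial : ℝ) ≠ 0 := Nat.cast_ne_zero.mpr (Nat.factorial_ne_zero _)
    have hkf : (k.factorial : ℝ) ≠ 0 := Nat.cast_ne_zero.mpr (Nat.factorial_ne_zero _)
    have hnk : (n:ℝ)-(k:ℝ) ≠ 0 := by
      have h : k < n := by omega
      have := (Nat.cast_lt (α := ℝ)).mpr h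
      intro hz; linarith
    field_simp
    ring_nf
    rw [mul_comm k 2, pow_mul]
    norm_num
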